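/- Let N be an even positive integer, c₂ real, and c₁ real with c := 2N c₁ an integer. Let N_t, P be positive integers, h_{t,i} ∈ ℂ complex gains, and k_i, l_i, k̃_t, l̃_t integers (path Dopplers and delays, and per-antenna CDDS steps), with m̃_t = k̃_t − c l̃_t and per-antenna MD-CDDS precoding matrices C_t = Π_N^{m̃_t mod N} P^{[k̃_t,l̃_t]} (where P^{[k̃,l̃]} is the diagonal phase-compensation matrix with entries conj(e^{(2πi/N)(m̄ l̃ + N c₂ (((m̄ + m̃) mod N)² − m̄²))})). Then Σ_{t=1}^{N_t} ( Σ_{i=1}^{P} h_{t,i} H(k_i, l_i) ) · C_t = Σ_{t=1}^{N_t} Σ_{i=1}^{P} h_{t,i} e^{−(2πi/N)(N c₁ (2 l_i l̃_t + l̃_t²) + m̃_t l_i)} H(k_i + k̃_t, l_i + l̃_t). That is, the multi-antenna MD-CDDS-AFDM system is equivalent to a single-antenna system whose effective paths have Dopplers k_i + k̃_t, delays l_i + l̃_t, and unit-modulus-rotated gains. -/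

import Mathlib

open Matrix Complex

/-- The `N × N` forward cyclic-shift matrix raised to the (integer) power `l`. -/
noncomputable def cyclicShift (N : ℕ) (l : ℤ) : Matrix (Fin N) (Fin N) ℂ :=
  Matrix.of fun p q => if ((p : ℕ) : ZMod N) = ((q : ℕ) : ZMod N) + (l : ZMod N) then 1 else 0

/-- The digital frequency-shift matrix `Δ_N^k = diag(e^{2πi k n / N}, n = 0,…,N−1)`. -/
noncomputable def dopplerShift (N : ℕ) (k : ℤ) : Matrix (Fin N) (Fin N) ℂ :=
  Matrix.diagonal fun n : Fin N =>
    Complex.exp (2 * Real.pi * Complex.I * (k : ℂ) * ((n : ℕ) : ℂ) / (N : ℂ))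

/-- The `N × N` unitary DFT matrix with entries `F[m,n] = e^{−2πi m n / N} / √N`. -/
noncomputable def dftMatrix (N : ℕ) : Matrix (Fin N) (Fin N) ℂ :=
  Matrix.of fun m n : Fin N =>
    Complex.exp (-(2 * Real.pi * Complex.I * ((m : ℕ) : ℂ) * ((n : ℕ) : ℂ) / (N : ℂ))) /
      (Real.sqrt N : ℂ)

/-- For a real parameter `c`, the diagonal chirp matrix `Λ_c = diag(e^{−2πi c q²})`. -/
noncomputable def chirpMatrix (N : ℕ) (c : ℝ) : Matrix (Fin N) (Fin N) ℂ :=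
  Matrix.diagonal fun q : Fin N =>
    Complex.exp (-(2 * Real.pi * Complex.I * (c : ℂ) * ((q : ℕ) : ℂ) ^ 2))

/-- The DAFT matrix `A = Λ_{c₂} F Λ_{c₁}`. -/
noncomputable def daft (N : ℕ) (c₁ c₂ : ℝ) : Matrix (Fin N) (Fin N) ℂ :=
  chirpMatrix N c₂ * dftMatrix N * chirpMatrix N c₁

/-- The DAFT-domain subchannel matrix `H(k,l) = A Δ_N^k Π_N^l Aᴴ`. -/
noncomputable def subChannel (N : ℕ) (c₁ c₂ : ℝ) (k l : ℤ) : Matrix (Fin N) (Fin N) ℂ :=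
  daft N c₁ c₂ * dopplerShift N k * cyclicShift N l * (daft N c₁ c₂)ᴴ

/-- The phase factor `ℰ(m̄, m̃, l̃) = e^{(2πi/N)(m̄ l̃ + N c₂ (((m̄ + m̃) mod N)² − m̄²))}`. -/
noncomputable def calE (N : ℕ) (c₂ : ℝ) (lt mt : ℤ) (mbar : ℤ) : ℂ :=
  Complex.exp ((2 * Real.pi * Complex.I / (N : ℂ)) *
    ((mbar : ℂ) * (lt : ℂ) +
      (N : ℂ) * (c₂ : ℂ) * ((((mbar + mt) % (N : ℤ) : ℤ) : ℂ) ^ 2 - (mbar : ℂ) ^ 2)))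

/-- The diagonal phase-compensation matrix `P^{[k̃,l̃]}` with entries
`P[m̄,m̄] = conj(ℰ(m̄, m̃, l̃))`. -/
noncomputable def phaseComp (N : ℕ) (c₂ : ℝ) (lt mt : ℤ) : Matrix (Fin N) (Fin N) ℂ :=
  Matrix.diagonal fun mbar : Fin N => (starRingEnd ℂ) (calE N c₂ lt mt ((mbar : ℕ) : ℤ))


lemma daft_apply (N : ℕ) (c₁ c₂ : ℝ) (p n : Fin N) :
    daft N c₁ c₂ p n =
      Complex.exp (-(2 * Real.pi * Complex.I * (c₂:ℂ) * ((p:ℕ):ℂ)^2)) *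
        (Complex.exp (-(2 * Real.pi * Complex.I * ((p:ℕ):ℂ) * ((n:ℕ):ℂ) / (N:ℂ))) / (Real.sqrt N : ℂ)) *
        Complex.exp (-(2 * Real.pi * Complex.I * (c₁:ℂ) * ((n:ℕ):ℂ)^2)) := by
  simp [daft, chirpMatrix, dftMatrix, Matrix.mul_diagonal, Matrix.diagonal_mul]

lemma daft_conj_apply (N : ℕ) (c₁ c₂ : ℝ) (r n' : Fin N) :
    (starRingEnd ℂ) (daft N c₁ c₂ r n') =
      Complex.exp (2 * Real.pi * Complex.I * (c₂:ℂ) * ((r:ℕ):ℂ)^2) *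
        (Complex.exp (2 * Real.pi * Complex.I * ((r:ℕ):ℂ) * ((n':ℕ):ℂ) / (N:ℂ)) / (Real.sqrt N : ℂ)) *
        Complex.exp (2 * Real.pi * Complex.I * (c₁:ℂ) * ((n':ℕ):ℂ)^2) := by
  rw [daft_apply]
  simp only [_root_.map_mul, map_div₀, ← Complex.exp_conj, map_neg, Complex.conj_I,
    Complex.conj_ofReal, map_ofNat, Complex.conj_natCast, map_pow]
  ring_nf

lemma subChannel_expand (N : ℕ) (c₁ c₂ : ℝ) (k l : ℤ) (p r : Fin N) :
    subChannel N c₁ c₂ k l p r =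
      ∑ n' : Fin N, ∑ n : Fin N,
        daft N c₁ c₂ p n *
          Complex.exp (2 * Real.pi * Complex.I * (k : ℂ) * ((n:ℕ):ℂ) / (N:ℂ)) *
          cyclicShift N l n n' * (starRingEnd ℂ) (daft N c₁ c₂ r n') := by
  simp only [subChannel, Matrix.mul_apply, Matrix.conjTranspose_apply, dopplerShift,
    Matrix.diagonal_apply, mul_ite, ite_mul, mul_zero, zero_mul, Finset.sum_ite_eq,
    Finset.sum_ite_eq', Finset.mem_univ, if_true, starRingEnd_apply, Finset.sum_mul]


lemma char_sum (N : ℕ) (hN : 0 < N) (a : ℤ) :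
    ∑ n : Fin N, Complex.exp (2 * Real.pi * Complex.I * (a : ℂ) * ((n : ℕ) : ℂ) / (N : ℂ)) =
      if (a : ZMod N) = 0 then (N : ℂ) else 0 := by
  have hNne : (N : ℂ) ≠ 0 := Nat.cast_ne_zero.mpr hN.ne'
  set ζ : ℂ := Complex.exp (2 * Real.pi * Complex.I * (a : ℂ) / (N : ℂ)) with hζ
  have hpow : ∀ n : Fin N,
      Complex.exp (2 * Real.pi * Complex.I * (a : ℂ) * ((n : ℕ) : ℂ) / (N : ℂ)) = ζ ^ (n : ℕ) := by
    intro n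
    rw [hζ, ← Complex.exp_nat_mul]
    ring_nf
  rw [Finset.sum_congr rfl fun n _ => hpow n]
  rw [Fin.sum_univ_eq_sum_range (fun i => ζ ^ i) N]
  by_cases hdvd : (a : ZMod N) = 0
  · rw [if_pos hdvd]
    obtain ⟨b, hb⟩ := (ZMod.intCast_zmod_eq_zero_iff_dvd a N).mp hdvd
    have hz1 : ζ = 1 := by
      rw [hζ, hb]
      have : 2 * (Real.pi : ℂ) * Complex.I * ((N : ℤ) * b : ℤ) / (N : ℂ) =
          (b : ℂ) * (2 * Real.pi * Complex.I) := by
        push_cast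
        field_simp
      rw [this, Complex.exp_int_mul_two_pi_mul_I]
    simp [hz1]
  · rw [if_neg hdvd]
    have h2 : (2 : ℂ) * Real.pi * Complex.I ≠ 0 := by
      simp [Real.pi_ne_zero, Complex.I_ne_zero]
    have hz1 : ζ ≠ 1 := by
      intro hz
      apply hdvd
      rw [hζ, Complex.exp_eq_one_iff] at hz
      obtain ⟨m, hm⟩ := hz
      have ham : (a : ℂ) = (m * N : ℤ) := by
        have : 2 * (Real.pi : ℂ) * Complex.I * (a : ℂ) =
            2 * Real.pi * Complex.I * ((m * N : ℤ) : ℂ) := by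
          field_simp at hm
          push_cast
          linear_combination (2 * (Real.pi : ℂ) * Complex.I) * hm
        exact mul_left_cancel₀ h2 this
      have : a = m * N := by exact_mod_cast ham
      rw [ZMod.intCast_zmod_eq_zero_iff_dvd]
      exact ⟨m, by rw [this]; ring⟩
    have hN' : ζ ^ N = 1 := by
      rw [hζ, ← Complex.exp_nat_mul]
      have : (N : ℂ) * (2 * Real.pi * Complex.I * (a : ℂ) / (N : ℂ)) =
          (a : ℂ) * (2 * Real.pi * Complex.I) := by field_simp
      rw [this, Complex.exp_int_mul_two_pi_mul_I]
    rw [geom_sum_eq hz1, hN']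
    simp


lemma key_term (N M : ℕ) (hN : 0 < N) (hM : N = M + M) (c₁ c₂ : ℝ)
    (c j k l p r q n' : ℤ) (hc : 2 * (N : ℝ) * c₁ = (c : ℝ))
    (hq : q = n' + l + (N : ℤ) * j) :
    Complex.exp (-(2 * Real.pi * Complex.I * (c₂:ℂ) * (p:ℂ)^2)) *
      (Complex.exp (-(2 * Real.pi * Complex.I * (p:ℂ) * (q:ℂ) / (N:ℂ))) / (Real.sqrt N : ℂ)) *
      Complex.exp (-(2 * Real.pi * Complex.I * (c₁:ℂ) * (q:ℂ)^2)) *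
      Complex.exp (2 * Real.pi * Complex.I * (k:ℂ) * (q:ℂ) / (N:ℂ)) *
      (Complex.exp (2 * Real.pi * Complex.I * (c₂:ℂ) * (r:ℂ)^2) *
        (Complex.exp (2 * Real.pi * Complex.I * (r:ℂ) * (n':ℂ) / (N:ℂ)) / (Real.sqrt N : ℂ)) *
        Complex.exp (2 * Real.pi * Complex.I * (c₁:ℂ) * (n':ℂ)^2)) =
    (1 / (N:ℂ)) *
      Complex.exp (2 * Real.pi * Complex.I * (c₂:ℂ) * ((r:ℂ)^2 - (p:ℂ)^2) +
        (2 * Real.pi * Complex.I / (N:ℂ)) * (((k:ℂ) - (p:ℂ)) * (l:ℂ) - (c:ℂ) * (l:ℂ)^2 / 2)) *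
      Complex.exp (2 * Real.pi * Complex.I * ((k:ℂ) - (p:ℂ) + (r:ℂ) - (c:ℂ) * (l:ℂ)) * (n':ℂ) / (N:ℂ)) := by
  subst hq
  have hNne : (N : ℂ) ≠ 0 := Nat.cast_ne_zero.mpr hN.ne'
  have hsq : (Real.sqrt N : ℂ) * (Real.sqrt N : ℂ) = (N : ℂ) := by
    rw [← Complex.ofReal_mul, Real.mul_self_sqrt (Nat.cast_nonneg N)]; norm_cast
  have hsqne : (Real.sqrt N : ℂ) ≠ 0 := by
    intro h0; rw [h0, mul_zero] at hsq; exact hNne hsq.symm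
  have hc₁ : (c₁ : ℂ) = (c : ℂ) * ((N:ℂ))⁻¹ / 2 := by
    have h2 : ((2 * (N:ℝ) * c₁ : ℝ) : ℂ) = ((c:ℝ) : ℂ) := by exact_mod_cast congrArg Complex.ofReal hc
    push_cast at h2
    field_simp
    linear_combination h2
  set J : ℤ := j * (k - p - c * l - c * n') - c * (M : ℤ) * j ^ 2 with hJ
  set E : ℂ := -(2 * Real.pi * Complex.I * (c₂:ℂ) * (p:ℂ)^2)
      + -(2 * Real.pi * Complex.I * (p:ℂ) * ((n' + l + (N:ℤ)*j : ℤ):ℂ) / (N:ℂ))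
      + -(2 * Real.pi * Complex.I * (c₁:ℂ) * ((n' + l + (N:ℤ)*j : ℤ):ℂ)^2)
      + 2 * Real.pi * Complex.I * (k:ℂ) * ((n' + l + (N:ℤ)*j : ℤ):ℂ) / (N:ℂ)
      + 2 * Real.pi * Complex.I * (c₂:ℂ) * (r:ℂ)^2
      + 2 * Real.pi * Complex.I * (r:ℂ) * (n':ℂ) / (N:ℂ)
      + 2 * Real.pi * Complex.I * (c₁:ℂ) * (n':ℂ)^2 with hE
  set F : ℂ := (2 * Real.pi * Complex.I * (c₂:ℂ) * ((r:ℂ)^2 - (p:ℂ)^2) +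
        (2 * Real.pi * Complex.I / (N:ℂ)) * (((k:ℂ) - (p:ℂ)) * (l:ℂ) - (c:ℂ) * (l:ℂ)^2 / 2))
      + 2 * Real.pi * Complex.I * ((k:ℂ) - (p:ℂ) + (r:ℂ) - (c:ℂ) * (l:ℂ)) * (n':ℂ) / (N:ℂ) with hF
  have hlhs : (Complex.exp (-(2 * Real.pi * Complex.I * (c₂:ℂ) * (p:ℂ)^2)) *
      (Complex.exp (-(2 * Real.pi * Complex.I * (p:ℂ) * ((n' + l + (N:ℤ)*j : ℤ):ℂ) / (N:ℂ))) / (Real.sqrt N : ℂ)) *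
      Complex.exp (-(2 * Real.pi * Complex.I * (c₁:ℂ) * ((n' + l + (N:ℤ)*j : ℤ):ℂ)^2)) *
      Complex.exp (2 * Real.pi * Complex.I * (k:ℂ) * ((n' + l + (N:ℤ)*j : ℤ):ℂ) / (N:ℂ)) *
      (Complex.exp (2 * Real.pi * Complex.I * (c₂:ℂ) * (r:ℂ)^2) *
        (Complex.exp (2 * Real.pi * Complex.I * (r:ℂ) * (n':ℂ) / (N:ℂ)) / (Real.sqrt N : ℂ)) *
        Complex.exp (2 * Real.pi * Complex.I * (c₁:ℂ) * (n':ℂ)^2))) = Complex.exp E / (N:ℂ) := by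
    rw [hE]
    rw [Complex.exp_add, Complex.exp_add, Complex.exp_add, Complex.exp_add, Complex.exp_add,
      Complex.exp_add, ← hsq]
    field_simp
  rw [hlhs]
  have hrhs : (1 / (N:ℂ)) *
      Complex.exp (2 * Real.pi * Complex.I * (c₂:ℂ) * ((r:ℂ)^2 - (p:ℂ)^2) +
        (2 * Real.pi * Complex.I / (N:ℂ)) * (((k:ℂ) - (p:ℂ)) * (l:ℂ) - (c:ℂ) * (l:ℂ)^2 / 2)) *
      Complex.exp (2 * Real.pi * Complex.I * ((k:ℂ) - (p:ℂ) + (r:ℂ) - (c:ℂ) * (l:ℂ)) * (n':ℂ) / (N:ℂ))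
      = Complex.exp F / (N:ℂ) := by
    have : Complex.exp F = Complex.exp (2 * Real.pi * Complex.I * (c₂:ℂ) * ((r:ℂ)^2 - (p:ℂ)^2) +
        (2 * Real.pi * Complex.I / (N:ℂ)) * (((k:ℂ) - (p:ℂ)) * (l:ℂ) - (c:ℂ) * (l:ℂ)^2 / 2)) *
      Complex.exp (2 * Real.pi * Complex.I * ((k:ℂ) - (p:ℂ) + (r:ℂ) - (c:ℂ) * (l:ℂ)) * (n':ℂ) / (N:ℂ)) := by
      rw [hF, Complex.exp_add]
    rw [this]
    ring
  rw [hrhs]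
  have hEF : E = F + (J:ℂ) * (2 * Real.pi * Complex.I) := by
    rw [hE, hF, hJ, hc₁]
    have hu : (N:ℂ) * ((N:ℂ))⁻¹ = 1 := mul_inv_cancel₀ hNne
    have hMC : (N : ℂ) = (M : ℂ) + (M : ℂ) := by exact_mod_cast congrArg (Nat.cast : ℕ → ℂ) hM
    push_cast
    linear_combination (2*Real.pi*Complex.I*(((k:ℂ)-(p:ℂ))*(j:ℂ) - (c:ℂ)*(l:ℂ)*(j:ℂ) - (c:ℂ)*(n':ℂ)*(j:ℂ) - (N:ℂ)*(c:ℂ)*(j:ℂ)^2/2)) * hu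
      + (-(Real.pi*Complex.I*(c:ℂ)*(j:ℂ)^2)) * hMC
  rw [hEF, Complex.exp_add, Complex.exp_int_mul_two_pi_mul_I, mul_one]

lemma subChannel_apply (N : ℕ) (hN : 0 < N) (hEven : Even N) (c₁ c₂ : ℝ) (c : ℤ)
    (hc : 2 * (N : ℝ) * c₁ = (c : ℝ)) (k l : ℤ) (p r : Fin N) :
    subChannel N c₁ c₂ k l p r =
      if ((p : ℕ) : ZMod N) = ((r : ℕ) : ZMod N) + ((k - c * l : ℤ) : ZMod N) then
        Complex.exp (2 * Real.pi * Complex.I * (c₂:ℂ) * (((r:ℕ):ℂ)^2 - ((p:ℕ):ℂ)^2) +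
          (2 * Real.pi * Complex.I / (N:ℂ)) * (((k:ℂ) - ((p:ℕ):ℂ)) * (l:ℂ) - (c:ℂ) * (l:ℂ)^2 / 2))
      else 0 := by
  haveI : NeZero N := ⟨hN.ne'⟩
  obtain ⟨M, hM⟩ := hEven
  have hNne : (N : ℂ) ≠ 0 := Nat.cast_ne_zero.mpr hN.ne'
  rw [subChannel_expand]
  -- the unique n with (n : ZMod N) = n' + l
  set q : Fin N → Fin N := fun n' =>
    ⟨((((n' : ℕ) : ZMod N) + (l : ZMod N))).val, ZMod.val_lt _⟩ with hqdef
  have hqz : ∀ n' : Fin N, (((q n' : ℕ)) : ZMod N) = ((n' : ℕ) : ZMod N) + (l : ZMod N) := by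
    intro n'
    simp [hqdef, ZMod.natCast_val, ZMod.cast_id]
  have collapse : ∀ n' : Fin N,
      (∑ n : Fin N, daft N c₁ c₂ p n *
        Complex.exp (2 * Real.pi * Complex.I * (k : ℂ) * ((n:ℕ):ℂ) / (N:ℂ)) *
        cyclicShift N l n n' * (starRingEnd ℂ) (daft N c₁ c₂ r n')) =
      daft N c₁ c₂ p (q n') *
        Complex.exp (2 * Real.pi * Complex.I * (k : ℂ) * ((q n':ℕ):ℂ) / (N:ℂ)) *
        (starRingEnd ℂ) (daft N c₁ c₂ r n') := by
    intro n'
    rw [Finset.sum_eq_single (q n')]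
    · have h1 : cyclicShift N l (q n') n' = 1 := by
        simp [cyclicShift, hqz n']
      rw [h1, mul_one]
    · intro b _ hb
      have h0 : cyclicShift N l b n' = 0 := by
        simp only [cyclicShift, Matrix.of_apply, ite_eq_right_iff]
        intro hcontra
        exfalso
        apply hb
        have : ((b : ℕ) : ZMod N) = ((q n' : ℕ) : ZMod N) := by rw [hqz n', hcontra]
        have hval : (b : ℕ) = ((q n' : ℕ)) := by
          have h1 := ZMod.val_cast_of_lt b.is_lt
          have h2 := ZMod.val_cast_of_lt (q n').is_lt
          rw [← h1, ← h2, this]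
        exact Fin.ext hval
      rw [h0, mul_zero, zero_mul]
    · simp
  rw [Finset.sum_congr rfl fun n' _ => collapse n']
  -- rewrite each term via key_term
  have hterm : ∀ n' : Fin N,
      daft N c₁ c₂ p (q n') *
        Complex.exp (2 * Real.pi * Complex.I * (k : ℂ) * ((q n':ℕ):ℂ) / (N:ℂ)) *
        (starRingEnd ℂ) (daft N c₁ c₂ r n') =
      ((1 / (N:ℂ)) *
        Complex.exp (2 * Real.pi * Complex.I * (c₂:ℂ) * (((r:ℕ):ℂ)^2 - ((p:ℕ):ℂ)^2) +
          (2 * Real.pi * Complex.I / (N:ℂ)) * (((k:ℂ) - ((p:ℕ):ℂ)) * (l:ℂ) - (c:ℂ) * (l:ℂ)^2 / 2))) *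
        Complex.exp (2 * Real.pi * Complex.I *
          ((k - ((p:ℕ):ℤ) + ((r:ℕ):ℤ) - c * l : ℤ) : ℂ) * ((n':ℕ):ℂ) / (N:ℂ)) := by
    intro n'
    have hdvd : (N : ℤ) ∣ (((q n' : ℕ) : ℤ) - ((n' : ℕ) : ℤ) - l) := by
      have : ((((q n' : ℕ) : ℤ) - ((n' : ℕ) : ℤ) - l : ℤ) : ZMod N) = 0 := by
        push_cast
        rw [hqz n']
        push_cast
        ring
      exact (ZMod.intCast_zmod_eq_zero_iff_dvd _ N).mp this
    obtain ⟨j, hj⟩ := hdvd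
    have hq' : ((q n' : ℕ) : ℤ) = ((n' : ℕ) : ℤ) + l + (N : ℤ) * j := by linarith [hj]
    have key := key_term N M hN hM c₁ c₂ c j k l ((p:ℕ):ℤ) ((r:ℕ):ℤ) ((q n' : ℕ):ℤ) ((n':ℕ):ℤ) hc hq'
    rw [daft_apply, daft_conj_apply]
    push_cast at key ⊢
    convert key using 2 <;> (rw [hmt]; push_cast; ring_nf)
  rw [Finset.sum_congr rfl fun n' _ => hterm n']
  rw [← Finset.mul_sum]
  rw [char_sum N hN]
  -- now split on the condition
  have hcondiff : (((k - ((p:ℕ):ℤ) + ((r:ℕ):ℤ) - c * l : ℤ) : ZMod N) = 0) ↔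
      (((p : ℕ) : ZMod N) = ((r : ℕ) : ZMod N) + ((k - c * l : ℤ) : ZMod N)) := by
    constructor
    · intro hzz
      push_cast at hzz ⊢
      linear_combination -hzz
    · intro hzz
      push_cast at hzz ⊢
      linear_combination -hzz
  by_cases hcond : ((p : ℕ) : ZMod N) = ((r : ℕ) : ZMod N) + ((k - c * l : ℤ) : ZMod N)
  · rw [if_pos (hcondiff.mpr hcond), if_pos hcond]
    field_simp
  · rw [if_neg (fun hx => hcond (hcondiff.mp hx)), if_neg hcond, mul_zero]


lemma key_term2 (N : ℕ) (hN : 0 < N) (c₁ c₂ : ℝ) (c k l kt lt p r x j₂ : ℤ)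
    (hc : 2 * (N : ℝ) * c₁ = (c : ℝ))
    (hp : p = r + (kt - c * lt) + (k - c * l) + (N : ℤ) * j₂) :
    Complex.exp (2 * Real.pi * Complex.I * (c₂:ℂ) * ((x:ℂ)^2 - (p:ℂ)^2) +
        (2 * Real.pi * Complex.I / (N:ℂ)) * (((k:ℂ) - (p:ℂ)) * (l:ℂ) - (c:ℂ) * (l:ℂ)^2 / 2)) *
      Complex.exp (-((2 * Real.pi * Complex.I / (N:ℂ)) *
        ((r:ℂ) * (lt:ℂ) + (N:ℂ) * (c₂:ℂ) * ((x:ℂ)^2 - (r:ℂ)^2)))) =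
    Complex.exp (-((2 * Real.pi * Complex.I / (N:ℂ)) *
        ((N:ℂ) * (c₁:ℂ) * (2 * (l:ℂ) * (lt:ℂ) + (lt:ℂ)^2) + ((kt - c * lt : ℤ) : ℂ) * (l:ℂ)))) *
      Complex.exp (2 * Real.pi * Complex.I * (c₂:ℂ) * ((r:ℂ)^2 - (p:ℂ)^2) +
        (2 * Real.pi * Complex.I / (N:ℂ)) *
          ((((k + kt : ℤ):ℂ) - (p:ℂ)) * (((l + lt : ℤ)):ℂ) - (c:ℂ) * (((l + lt : ℤ)):ℂ)^2 / 2)) := by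
  subst hp
  have hNne : (N : ℂ) ≠ 0 := Nat.cast_ne_zero.mpr hN.ne'
  have hu : (N:ℂ) * ((N:ℂ))⁻¹ = 1 := mul_inv_cancel₀ hNne
  have hNc₁ : 2 * ((N:ℂ) * (c₁:ℂ)) = (c:ℂ) := by
    have h2 : ((2 * (N:ℝ) * c₁ : ℝ) : ℂ) = ((c:ℝ) : ℂ) := by exact_mod_cast congrArg Complex.ofReal hc
    push_cast at h2
    linear_combination h2
  rw [← Complex.exp_add, ← Complex.exp_add]
  rw [show (2 * Real.pi * Complex.I * (c₂:ℂ) *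
        ((x:ℂ)^2 - (((r + (kt - c * lt) + (k - c * l) + (N : ℤ) * j₂ : ℤ)):ℂ)^2) +
        (2 * Real.pi * Complex.I / (N:ℂ)) *
          (((k:ℂ) - (((r + (kt - c * lt) + (k - c * l) + (N : ℤ) * j₂ : ℤ)):ℂ)) * (l:ℂ) - (c:ℂ) * (l:ℂ)^2 / 2)) +
      -((2 * Real.pi * Complex.I / (N:ℂ)) *
        ((r:ℂ) * (lt:ℂ) + (N:ℂ) * (c₂:ℂ) * ((x:ℂ)^2 - (r:ℂ)^2))) =
      (-((2 * Real.pi * Complex.I / (N:ℂ)) *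
        ((N:ℂ) * (c₁:ℂ) * (2 * (l:ℂ) * (lt:ℂ) + (lt:ℂ)^2) + ((kt - c * lt : ℤ) : ℂ) * (l:ℂ))) +
      (2 * Real.pi * Complex.I * (c₂:ℂ) *
          ((r:ℂ)^2 - (((r + (kt - c * lt) + (k - c * l) + (N : ℤ) * j₂ : ℤ)):ℂ)^2) +
        (2 * Real.pi * Complex.I / (N:ℂ)) *
          ((((k + kt : ℤ):ℂ) - (((r + (kt - c * lt) + (k - c * l) + (N : ℤ) * j₂ : ℤ)):ℂ)) * (((l + lt : ℤ)):ℂ) -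
            (c:ℂ) * (((l + lt : ℤ)):ℂ)^2 / 2))) + ((j₂ * lt : ℤ) : ℂ) * (2 * Real.pi * Complex.I) from by
    push_cast
    linear_combination (2 * Real.pi * Complex.I *
        (-(c₂:ℂ) * (x:ℂ)^2 + (c₂:ℂ) * (r:ℂ)^2 + (lt:ℂ) * (j₂:ℂ))) * hu +
      (Real.pi * Complex.I * ((N:ℂ))⁻¹ * (2 * (l:ℂ) * (lt:ℂ) + (lt:ℂ)^2)) * hNc₁]
  rw [Complex.exp_add, Complex.exp_int_mul_two_pi_mul_I, mul_one]


lemma conj_calE (N : ℕ) (c₂ : ℝ) (lt mt mbar : ℤ) :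
    (starRingEnd ℂ) (calE N c₂ lt mt mbar) =
      Complex.exp (-((2 * Real.pi * Complex.I / (N:ℂ)) *
        ((mbar:ℂ) * (lt:ℂ) + (N:ℂ) * (c₂:ℂ) *
          ((((mbar + mt) % (N:ℤ) : ℤ):ℂ)^2 - (mbar:ℂ)^2)))) := by
  rw [calE, ← Complex.exp_conj]
  congr 1
  simp only [_root_.map_mul, map_div₀, map_add, map_sub, map_pow, Complex.conj_I,
    Complex.conj_ofReal, map_ofNat, Complex.conj_natCast, map_intCast]
  ring

lemma chan_mul_precoder (N : ℕ) (hN : 0 < N) (hEven : Even N) (c₁ c₂ : ℝ) (c : ℤ)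
    (hc : 2 * (N : ℝ) * c₁ = (c : ℝ)) (k l kt lt : ℤ) :
    subChannel N c₁ c₂ k l * (cyclicShift N (kt - c * lt) * phaseComp N c₂ lt (kt - c * lt)) =
    Complex.exp (-((2 * Real.pi * Complex.I / (N : ℂ)) *
        ((N : ℂ) * (c₁ : ℂ) * (2 * (l : ℂ) * (lt : ℂ) + (lt : ℂ) ^ 2) +
          ((kt - c * lt : ℤ) : ℂ) * (l : ℂ)))) • subChannel N c₁ c₂ (k + kt) (l + lt) := by
  haveI : NeZero N := ⟨hN.ne'⟩
  ext p r
  rw [← Matrix.mul_assoc, Matrix.smul_apply, smul_eq_mul]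
  simp only [phaseComp, Matrix.mul_diagonal]
  rw [Matrix.mul_apply]
  set mt : ℤ := kt - c * lt with hmt
  set x₀ : Fin N := ⟨(((r:ℕ):ZMod N) + ((mt : ℤ) : ZMod N)).val, ZMod.val_lt _⟩ with hx₀
  have hx₀z : (((x₀ : ℕ)) : ZMod N) = ((r : ℕ) : ZMod N) + ((mt : ℤ) : ZMod N) := by
    simp [hx₀, ZMod.natCast_val, ZMod.cast_id]
  have collapse : (∑ x : Fin N, subChannel N c₁ c₂ k l p x * cyclicShift N mt x r) =
      subChannel N c₁ c₂ k l p x₀ := by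
    rw [Finset.sum_eq_single x₀]
    · have h1 : cyclicShift N mt x₀ r = 1 := by simp [cyclicShift, hx₀z]
      rw [h1, mul_one]
    · intro b _ hb
      have h0 : cyclicShift N mt b r = 0 := by
        simp only [cyclicShift, Matrix.of_apply, ite_eq_right_iff]
        intro hcontra
        exfalso
        apply hb
        have hbz : ((b : ℕ) : ZMod N) = ((x₀ : ℕ) : ZMod N) := by rw [hx₀z, hcontra]
        have hval : (b : ℕ) = (x₀ : ℕ) := by
          have h1 := ZMod.val_cast_of_lt b.is_lt
          have h2 := ZMod.val_cast_of_lt x₀.is_lt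
          rw [← h1, ← h2, hbz]
        exact Fin.ext hval
      rw [h0, mul_zero]
    · simp
  rw [collapse]
  have hx₀int : ((x₀ : ℕ) : ℤ) = (((r : ℕ) : ℤ) + mt) % (N : ℤ) := by
    have : (((r:ℕ):ZMod N) + ((mt : ℤ) : ZMod N)) = (((((r:ℕ):ℤ) + mt : ℤ)) : ZMod N) := by
      push_cast; ring
    rw [hx₀]
    simp only [this]
    exact_mod_cast ZMod.val_intCast (((r:ℕ):ℤ) + mt)
  rw [conj_calE]
  rw [subChannel_apply N hN hEven c₁ c₂ c hc k l p x₀,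
    subChannel_apply N hN hEven c₁ c₂ c hc (k + kt) (l + lt) p r]
  have hcondiff : (((p : ℕ) : ZMod N) = ((x₀ : ℕ) : ZMod N) + ((k - c * l : ℤ) : ZMod N)) ↔
      (((p : ℕ) : ZMod N) = ((r : ℕ) : ZMod N) + ((k + kt - c * (l + lt) : ℤ) : ZMod N)) := by
    rw [hx₀z]
    constructor
    · intro hzz
      rw [hzz, hmt]; push_cast; ring
    · intro hzz
      rw [hzz, hmt]; push_cast; ring
  by_cases hcond : ((p : ℕ) : ZMod N) = ((r : ℕ) : ZMod N) + ((k + kt - c * (l + lt) : ℤ) : ZMod N)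
  · rw [if_pos (hcondiff.mpr hcond), if_pos hcond]
    -- extract j₂
    have hdvd : (N : ℤ) ∣ (((p : ℕ) : ℤ) - (((r : ℕ) : ℤ) + mt + (k - c * l))) := by
      apply (ZMod.intCast_zmod_eq_zero_iff_dvd _ N).mp
      push_cast
      rw [hcond]
      push_cast [hmt]
      ring
    obtain ⟨j₂, hj₂⟩ := hdvd
    have hp : ((p : ℕ) : ℤ) = ((r : ℕ) : ℤ) + (kt - c * lt) + (k - c * l) + (N : ℤ) * j₂ := by
      rw [← hmt]; linarith [hj₂]
    have key := key_term2 N hN c₁ c₂ c k l kt lt ((p:ℕ):ℤ) ((r:ℕ):ℤ) ((x₀:ℕ):ℤ) j₂ hc hp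
    rw [show ((((r:ℕ):ℤ) + mt) % (N : ℤ) : ℤ) = ((x₀ : ℕ) : ℤ) from hx₀int.symm]
    push_cast at key ⊢
    convert key using 2 <;> (rw [hmt]; push_cast; ring_nf)
  · rw [if_neg (fun hx => hcond (hcondiff.mp hx)), if_neg hcond, zero_mul, mul_zero]

/-- the multi-antenna MD-CDDS-AFDM system is equivalent to a single-antenna
system whose effective paths have Dopplers `k_i + k̃_t`, delays `l_i + l̃_t`, and
unit-modulus-rotated gains:
`Σ_t (Σ_i h_{t,i} H(k_i,l_i)) C_t
  = Σ_t Σ_i h_{t,i} e^{−(2πi/N)(N c₁ (2 l_i l̃_t + l̃_t²) + m̃_t l_i)} H(k_i+k̃_t, l_i+l̃_t)`,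
with `C_t = Π_N^{m̃_t} P^{[k̃_t,l̃_t]}`, `m̃_t = k̃_t − c l̃_t`, `c = 2 N c₁` an integer. -/
theorem mdcdds_afdm_equivalent_channel (N Nt P : ℕ) (hN : 0 < N) (hEven : Even N)
    (hNt : 0 < Nt) (hP : 0 < P) (c₁ c₂ : ℝ) (c : ℤ) (hc : 2 * (N : ℝ) * c₁ = (c : ℝ))
    (h : Fin Nt → Fin P → ℂ) (kp lp : Fin P → ℤ) (kt lt : Fin Nt → ℤ) :
    ∑ t : Fin Nt,
      (∑ i : Fin P, h t i • subChannel N c₁ c₂ (kp i) (lp i)) *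
        (cyclicShift N (kt t - c * lt t) * phaseComp N c₂ (lt t) (kt t - c * lt t)) =
    ∑ t : Fin Nt, ∑ i : Fin P,
      (h t i * Complex.exp (-((2 * Real.pi * Complex.I / (N : ℂ)) *
          ((N : ℂ) * (c₁ : ℂ) * (2 * (lp i : ℂ) * (lt t : ℂ) + (lt t : ℂ) ^ 2) +
            ((kt t - c * lt t : ℤ) : ℂ) * (lp i : ℂ))))) •
        subChannel N c₁ c₂ (kp i + kt t) (lp i + lt t) := by
  refine Finset.sum_congr rfl fun t _ => ?_
  rw [Finset.sum_mul]
  refine Finset.sum_congr rfl fun i _ => ?_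
  rw [smul_mul_assoc, chan_mul_precoder N hN hEven c₁ c₂ c hc (kp i) (lp i) (kt t) (lt t),
    smul_smul]
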